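/- Let d = (7 − √21)/14. Let x, y, e₀, e, f be real numbers with x ∈ [1−d, 1], y ∈ [1−d, 1], e₀ ∈ [x−d, x], e ∈ [x+y−1, 1], f ∈ [y−d, y]. Define Ŵ₆(x,y,e₀,e,f) = e₀·max(e₀−e, 0)/((e+e₀−x)·e) + e₀²·(e+e₀−x)·max(f−e, 0)/((e+e₀−x+f−y)·(e+f−y)·e·f) + e₀·max(e₀−e, 0)/((e+e₀−x+f−y)·e). Then Ŵ₆(x,y,e₀,e,f) ≤ Ŵ₆(x,y,e₀,x+y−1,f). -/
import Mathlib

private lemma key_ineq (A B C a t g : ℝ) (hA : 0 < A) (hB : 0 < B) (hC : 0 < C)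
    (ha : 0 < a) (ht : 0 ≤ t) (hg : 0 ≤ g)
    (h1 : 0 ≤ C*B*(A-a) + A*a*(B+C)) :
    (A+t)*(g-t)*(C*B*a) ≤ A*g*((C+t)*(B+t)*(a+t)) := by
  have e1 : A*g*((C+t)*(B+t)*(a+t)) - (A+t)*(g-t)*(C*B*a)
      = t*(g*(C*B*(A-a)+A*a*(B+C)) + A*(C*B*a))
      + t^2*(A*g*(a+B+C)+C*B*a) + t^3*(A*g) := by ring
  have p1 : 0 ≤ t*(g*(C*B*(A-a)+A*a*(B+C)) + A*(C*B*a)) :=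
    mul_nonneg ht (add_nonneg (mul_nonneg hg h1) (by positivity))
  have p2 : 0 ≤ t^2*(A*g*(a+B+C)+C*B*a) := by positivity
  have p3 : 0 ≤ t^3*(A*g) :=
    mul_nonneg (pow_nonneg ht 3) (mul_nonneg hA.le hg)
  linarith



/-- The objective function `Ŵ₆` of program (P6). -/
noncomputable def W6hat (x y e₀ e f : ℝ) : ℝ :=
  e₀ * max (e₀ - e) 0 / ((e + e₀ - x) * e)
    + e₀ ^ 2 * (e + e₀ - x) * max (f - e) 0 / ((e + e₀ - x + f - y) * (e + f - y) * e * f)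
    + e₀ * max (e₀ - e) 0 / ((e + e₀ - x + f - y) * e)

set_option maxHeartbeats 2000000 in
/-- Under the constraints of program (P6) with `d = (7−√21)/14`,
the objective `Ŵ₆` does not decrease when `e` is replaced by its lower bound
`x + y − 1`. -/
theorem W6hat_le (d x y e₀ e f : ℝ)
    (hd : d = (7 - Real.sqrt 21) / 14)
    (hx : x ∈ Set.Icc (1 - d) 1) (hy : y ∈ Set.Icc (1 - d) 1)
    (he₀ : e₀ ∈ Set.Icc (x - d) x) (he : e ∈ Set.Icc (x + y - 1) 1)
    (hf : f ∈ Set.Icc (y - d) y) :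
    W6hat x y e₀ e f ≤ W6hat x y e₀ (x + y - 1) f := by
  obtain ⟨hx1, hx2⟩ := hx
  obtain ⟨hy1, hy2⟩ := hy
  obtain ⟨he₀1, he₀2⟩ := he₀
  obtain ⟨he1, he2⟩ := he
  obtain ⟨hf1, hf2⟩ := hf
  have hs1 : Real.sqrt 21 ≤ 5 := by
    nlinarith [Real.sq_sqrt (by norm_num : (0:ℝ) ≤ 21), Real.sqrt_nonneg 21]
  have hs2 : (4:ℝ) ≤ Real.sqrt 21 := by
    nlinarith [Real.sq_sqrt (by norm_num : (0:ℝ) ≤ 21), Real.sqrt_nonneg 21]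
  have hd1 : (1:ℝ)/7 ≤ d := by rw [hd]; linarith
  have hd2 : d ≤ 3/14 := by rw [hd]; linarith
  -- positivity facts
  have hapos : 0 < x + y - 1 := by linarith
  have hepos : 0 < e := by linarith
  have hfpos : 0 < f := by linarith
  have he₀pos : 0 < e₀ := by linarith
  have hAa : 0 < x + y - 1 + e₀ - x := by linarith
  have hAe : 0 < e + e₀ - x := by linarith
  have hBa : 0 < x + y - 1 + f - y := by linarith
  have hBe : 0 < e + f - y := by linarith
  have hCa : 0 < x + y - 1 + e₀ - x + f - y := by linarith
  have hCe : 0 < e + e₀ - x + f - y := by linarith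
  unfold W6hat
  have T1 : e₀ * max (e₀ - e) 0 / ((e + e₀ - x) * e)
      ≤ e₀ * max (e₀ - (x + y - 1)) 0 / ((x + y - 1 + e₀ - x) * (x + y - 1)) := by
    rcases le_or_gt e₀ e with h | h
    · rw [max_eq_right (by linarith : e₀ - e ≤ 0)]
      simp only [mul_zero, zero_div]
      exact div_nonneg (mul_nonneg he₀pos.le (le_max_right _ _)) (by positivity)
    · rw [max_eq_left (by linarith : (0:ℝ) ≤ e₀ - e),
        max_eq_left (by linarith : (0:ℝ) ≤ e₀ - (x + y - 1))]
      have hnum : e₀ * (e₀ - e) ≤ e₀ * (e₀ - (x + y - 1)) :=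
        mul_le_mul_of_nonneg_left (by linarith) he₀pos.le
      have hden : (x + y - 1 + e₀ - x) * (x + y - 1) ≤ (e + e₀ - x) * e := by
        nlinarith [mul_nonneg (show (0:ℝ) ≤ e - (x + y - 1) by linarith)
          (show (0:ℝ) ≤ e + (x + y - 1) + e₀ - x by linarith)]
      exact div_le_div₀ (mul_nonneg he₀pos.le (by linarith)) hnum (by positivity) hden
  have T3 : e₀ * max (e₀ - e) 0 / ((e + e₀ - x + f - y) * e)
      ≤ e₀ * max (e₀ - (x + y - 1)) 0 / ((x + y - 1 + e₀ - x + f - y) * (x + y - 1)) := by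
    rcases le_or_gt e₀ e with h | h
    · rw [max_eq_right (by linarith : e₀ - e ≤ 0)]
      simp only [mul_zero, zero_div]
      exact div_nonneg (mul_nonneg he₀pos.le (le_max_right _ _)) (by positivity)
    · rw [max_eq_left (by linarith : (0:ℝ) ≤ e₀ - e),
        max_eq_left (by linarith : (0:ℝ) ≤ e₀ - (x + y - 1))]
      have hnum : e₀ * (e₀ - e) ≤ e₀ * (e₀ - (x + y - 1)) :=
        mul_le_mul_of_nonneg_left (by linarith) he₀pos.le
      have hden : (x + y - 1 + e₀ - x + f - y) * (x + y - 1) ≤ (e + e₀ - x + f - y) * e := by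
        nlinarith [mul_nonneg (show (0:ℝ) ≤ e - (x + y - 1) by linarith)
          (show (0:ℝ) ≤ e + (x + y - 1) + e₀ - x + f - y by linarith)]
      exact div_le_div₀ (mul_nonneg he₀pos.le (by linarith)) hnum (by positivity) hden
  have T2 : e₀ ^ 2 * (e + e₀ - x) * max (f - e) 0 / ((e + e₀ - x + f - y) * (e + f - y) * e * f)
      ≤ e₀ ^ 2 * (x + y - 1 + e₀ - x) * max (f - (x + y - 1)) 0 /
        ((x + y - 1 + e₀ - x + f - y) * (x + y - 1 + f - y) * (x + y - 1) * f) := by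
    rcases le_or_gt f e with h | h
    · rw [max_eq_right (by linarith : f - e ≤ 0)]
      simp only [mul_zero, zero_div]
      exact div_nonneg (mul_nonneg (by positivity) (le_max_right _ _)) (by positivity)
    · rw [max_eq_left (by linarith : (0:ℝ) ≤ f - e),
        max_eq_left (by linarith : (0:ℝ) ≤ f - (x + y - 1))]
      rw [div_le_div_iff₀ (by positivity) (by positivity)]
      have hd0 : (0:ℝ) ≤ d := by linarith
      have k0 : d * ((x + y - 1 + e₀ - x + f - y) * (x + y - 1 + f - y))
          ≤ d * (x + y - 1 + e₀ - x + f - y) :=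
        mul_le_mul_of_nonneg_left
          (by nlinarith [mul_nonneg hCa.le (show (0:ℝ) ≤ 1 - (x + y - 1 + f - y) by linarith)])
          hd0
      have k1 : -(d * ((x + y - 1 + e₀ - x + f - y) * (x + y - 1 + f - y)))
          ≤ (x + y - 1 + e₀ - x + f - y) * (x + y - 1 + f - y) *
            ((x + y - 1 + e₀ - x) - (x + y - 1)) := by
        nlinarith [mul_nonneg (mul_pos hCa hBa).le (show (0:ℝ) ≤ e₀ - x + d by linarith)]
      have k2 : 20 / 49 * (x + y - 1 + e₀ - x + f - y)
          ≤ (x + y - 1 + e₀ - x) * (x + y - 1) *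
            ((x + y - 1 + f - y) + (x + y - 1 + e₀ - x + f - y)) := by
        have hAa2 : (10:ℝ)/49 ≤ (x + y - 1 + e₀ - x) * (x + y - 1) := by
          nlinarith [mul_nonneg (show (0:ℝ) ≤ x + y - 1 + e₀ - x - 5/14 by linarith)
            (show (0:ℝ) ≤ x + y - 1 - 4/7 by linarith)]
        have h2C : 2 * (x + y - 1 + e₀ - x + f - y)
            ≤ (x + y - 1 + f - y) + (x + y - 1 + e₀ - x + f - y) := by linarith
        nlinarith [mul_le_mul hAa2 h2C (by linarith) (by positivity)]
      have k3 : d * (x + y - 1 + e₀ - x + f - y) ≤ 20/49 * (x + y - 1 + e₀ - x + f - y) :=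
        mul_le_mul_of_nonneg_right (by linarith) hCa.le
      have h1 : 0 ≤ (x + y - 1 + e₀ - x + f - y) * (x + y - 1 + f - y) *
          ((x + y - 1 + e₀ - x) - (x + y - 1)) +
          (x + y - 1 + e₀ - x) * (x + y - 1) *
          ((x + y - 1 + f - y) + (x + y - 1 + e₀ - x + f - y)) := by linarith
      have key := key_ineq (x + y - 1 + e₀ - x) (x + y - 1 + f - y)
        (x + y - 1 + e₀ - x + f - y) (x + y - 1) (e - (x + y - 1)) (f - (x + y - 1))
        hAa hBa hCa hapos (by linarith) (by linarith) h1
      have hmul := mul_le_mul_of_nonneg_left key (by positivity : (0:ℝ) ≤ e₀ ^ 2 * f)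
      linarith [hmul]
  exact add_le_add (add_le_add T1 T2) T3
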